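/- Let I = ⟨u_1,...,u_r⟩ be a complete intersection monomial ideal in S. Then for every associated prime P of I and every n ≥ 1, v(I^n) = v_P(I^n) = n·α(I) + v(I) − α(I), where v(I) = ∑_{i=1}^r deg u_i − r and α(I) is the initial degree of I. -/

import Mathlib

open MvPolynomial Ideal

/-- The v-number of a homogeneous ideal `J`. -/
noncomputable def vnumber {K : Type*} [Field K] {σ : Type*}
    (J : Ideal (MvPolynomial σ K)) : ℕ :=
  sInf {d : ℕ | ∃ f : MvPolynomial σ K, f.IsHomogeneous d ∧
    Submodule.colon J (Ideal.span {f}) ∈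
      associatedPrimes (MvPolynomial σ K) (MvPolynomial σ K ⧸ J)}

/-- The local v-number of `J` at a prime `P`. -/
noncomputable def vnumberAt {K : Type*} [Field K] {σ : Type*}
    (J P : Ideal (MvPolynomial σ K)) : ℕ :=
  sInf {d : ℕ | ∃ f : MvPolynomial σ K, f.IsHomogeneous d ∧
    Submodule.colon J (Ideal.span {f}) = P}

namespace CIv
open scoped Classical
variable {K : Type*} [Field K] {σ : Type*}

/-- covering relation for monomial ideals -/
def Cov (A : Set (σ →₀ ℕ)) (m : σ →₀ ℕ) : Prop := ∃ a ∈ A, a ≤ m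

theorem Cov.mono {A : Set (σ →₀ ℕ)} {m m' : σ →₀ ℕ} (h : Cov A m) (hm : m ≤ m') : Cov A m' := by
  obtain ⟨a, ha, hle⟩ := h; exact ⟨a, ha, hle.trans hm⟩

/-- the monomial ideal with exponent set A -/
noncomputable def mspan (K : Type*) [Field K] {σ : Type*} (A : Set (σ →₀ ℕ)) :
    Ideal (MvPolynomial σ K) :=
  Ideal.span ((fun a => (monomial a 1 : MvPolynomial σ K)) '' A)

theorem mem_mspan {A : Set (σ →₀ ℕ)} {f : MvPolynomial σ K} :
    f ∈ mspan K A ↔ ∀ m ∈ f.support, Cov A m := by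
  classical
  constructor
  · intro hf
    refine Submodule.span_induction ?_ ?_ ?_ ?_ hf
    · rintro x ⟨a, ha, rfl⟩ m hm
      rw [MvPolynomial.support_monomial] at hm
      simp only [if_neg (one_ne_zero (α := K)), Finset.mem_singleton] at hm
      exact ⟨a, ha, le_of_eq hm.symm⟩
    · intro m hm; simp at hm
    · intro x y _ _ hx hy m hm
      rcases Finset.mem_union.1 (MvPolynomial.support_add hm) with h | h
      · exact hx m h
      · exact hy m h
    · intro a x _ hx m hm
      have : m ∈ (a * x).support := by simpa [smul_eq_mul] using hm
      obtain ⟨m1, hm1, m2, hm2, rfl⟩ := Finset.mem_add.1 (MvPolynomial.support_mul a x this)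
      exact (hx m2 hm2).mono (le_add_self)
  · intro h
    rw [f.as_sum]
    refine Ideal.sum_mem _ fun m hm => ?_
    obtain ⟨a, ha, hle⟩ := h m hm
    have : (monomial m (coeff m f) : MvPolynomial σ K)
        = monomial a 1 * monomial (m - a) (coeff m f) := by
      rw [monomial_mul, one_mul, add_tsub_cancel_of_le hle]
    rw [this]
    exact Ideal.mul_mem_right _ _ (Ideal.subset_span ⟨a, ha, rfl⟩)

theorem mono_mem_mspan {A : Set (σ →₀ ℕ)} {m : σ →₀ ℕ} :
    (monomial m 1 : MvPolynomial σ K) ∈ mspan K A ↔ Cov A m := by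
  classical
  rw [mem_mspan]
  constructor
  · intro h
    exact h m (by rw [MvPolynomial.support_monomial, if_neg (one_ne_zero (α := K))]; simp)
  · intro h m' hm'
    rw [MvPolynomial.support_monomial] at hm'
    simp only [if_neg (one_ne_zero (α := K)), Finset.mem_singleton] at hm'
    exact hm' ▸ h

/-- exponent set of the n-th power -/
def Apow {r : ℕ} (ee : Fin r → (σ →₀ ℕ)) (n : ℕ) : Set (σ →₀ ℕ) :=
  {v | ∃ a : Fin r → ℕ, (∑ l, a l) = n ∧ v = ∑ l, a l • ee l}

theorem single_sum_smul {r : ℕ} (ee : Fin r → (σ →₀ ℕ)) (l : Fin r) (t : ℕ) :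
    (∑ k, (Pi.single l t : Fin r → ℕ) k • ee k) = t • ee l := by
  rw [Finset.sum_eq_single l]
  · simp
  · intro k _ hk; rw [Pi.single_eq_of_ne hk]; simp
  · intro h; exact absurd (Finset.mem_univ l) h

theorem mspan_range_pow {r : ℕ} (ee : Fin r → (σ →₀ ℕ)) (n : ℕ) :
    (Ideal.span (Set.range (fun l => (monomial (ee l) 1 : MvPolynomial σ K)))) ^ n
      = mspan K (Apow ee n) := by
  classical
  induction n with
  | zero =>
    rw [pow_zero, Ideal.one_eq_top, eq_comm, Ideal.eq_top_iff_one]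
    have h0 : (0 : σ →₀ ℕ) ∈ Apow ee 0 := ⟨0, by simp, by simp⟩
    have := mono_mem_mspan (K := K) (A := Apow ee 0) (m := 0) |>.2 ⟨0, h0, le_refl _⟩
    simpa using this
  | succ n ih =>
    rw [pow_succ, ih]
    apply le_antisymm
    · rw [Ideal.mul_le]
      intro x hx y hy
      rw [mem_mspan] at hx ⊢
      intro m hm
      obtain ⟨m1, hm1, m2, hm2, rfl⟩ := Finset.mem_add.1 (MvPolynomial.support_mul x y hm)
      obtain ⟨v, ⟨a, ha, rfl⟩, hva⟩ := hx m1 hm1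
      have hy' : Cov (Set.range ee) m2 := by
        have : y ∈ mspan K (Set.range ee) := by
          rw [mspan, ← Set.range_comp] at *
          exact hy
        exact (mem_mspan.1 this) m2 hm2
      obtain ⟨w, ⟨l, rfl⟩, hwl⟩ := hy'
      set a2 : Fin r → ℕ := fun k => a k + (Pi.single l 1 : Fin r → ℕ) k with ha2
      refine ⟨∑ k, a2 k • ee k, ⟨a2, ?_, rfl⟩, ?_⟩
      · simp [ha2, Finset.sum_add_distrib, ha]
      · have : (∑ k, a2 k • ee k) = (∑ k, a k • ee k) + ee l := by
          rw [← one_smul ℕ (ee l), ← single_sum_smul ee l 1, ← Finset.sum_add_distrib]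
          refine Finset.sum_congr rfl fun k _ => ?_
          rw [ha2]; simp [add_smul]
        rw [this]
        exact add_le_add hva hwl
    · rw [mspan, Ideal.span_le]
      rintro x ⟨v, ⟨a, ha, rfl⟩, rfl⟩
      have hpos : ∃ l0, a l0 ≠ 0 := by
        by_contra h
        push_neg at h
        simp only [Finset.sum_congr, h] at ha
        simp at ha
      obtain ⟨l0, hl0⟩ := hpos
      set a' : Fin r → ℕ := Function.update a l0 (a l0 - 1) with ha'
      have hsplit : (∑ l, a l • ee l) = (∑ l, a' l • ee l) + ee l0 := by
        rw [← Finset.add_sum_erase _ _ (Finset.mem_univ l0),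
            ← Finset.add_sum_erase _ (fun l => a' l • ee l) (Finset.mem_univ l0)]
        have h1 : a' l0 = a l0 - 1 := Function.update_self _ _ _
        have h2 : ∀ k ∈ Finset.univ.erase l0, a' k • ee k = a k • ee k := by
          intro k hk
          rw [ha', Function.update_of_ne (Finset.ne_of_mem_erase hk)]
        rw [Finset.sum_congr rfl h2, h1]
        have hx : a l0 = (a l0 - 1) + 1 := (Nat.succ_pred_eq_of_pos (Nat.pos_of_ne_zero hl0)).symm
        conv_lhs => rw [hx]
        rw [add_smul, one_smul, add_right_comm]
      have hsum' : (∑ l, a' l) = n := by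
        have : (∑ l, a l) = (∑ l, a' l) + 1 := by
          rw [← Finset.add_sum_erase _ _ (Finset.mem_univ l0),
              ← Finset.add_sum_erase _ a' (Finset.mem_univ l0)]
          have h2 : ∀ k ∈ Finset.univ.erase l0, a' k = a k := fun k hk =>
            Function.update_of_ne (Finset.ne_of_mem_erase hk) _ _
          rw [Finset.sum_congr rfl h2, ha', Function.update_self]
          have hs : (∑ x ∈ Finset.univ.erase l0, a x) = (Finset.univ.erase l0).sum a := rfl
          omega
        omega
      rw [hsplit]
      have hfac : (monomial ((∑ l, a' l • ee l) + ee l0) (1:K))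
          = monomial (∑ l, a' l • ee l) 1 * monomial (ee l0) 1 := by
        rw [monomial_mul, one_mul]
      show (monomial ((∑ l, a' l • ee l) + ee l0) (1:K)) ∈ _
      rw [hfac]
      exact Ideal.mul_mem_mul
        (mono_mem_mspan.2 ⟨_, ⟨a', hsum', rfl⟩, le_refl _⟩)
        (Ideal.subset_span ⟨l0, rfl⟩)

/-- the max power of a monomial dividing m -/
def bb (e : σ →₀ ℕ) (hne : e.support.Nonempty) (m : σ →₀ ℕ) : ℕ :=
  e.support.inf' hne fun i => m i / e i

theorem smul_le_iff_le_bb {e : σ →₀ ℕ} (hne : e.support.Nonempty) {a : ℕ} {m : σ →₀ ℕ} :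
    a • e ≤ m ↔ a ≤ bb e hne m := by
  rw [bb, Finset.le_inf'_iff, Finsupp.le_def]
  constructor
  · intro h i hi
    rw [Nat.le_div_iff_mul_le (Finsupp.mem_support_iff.1 hi |> Nat.pos_of_ne_zero)]
    simpa [mul_comm] using h i
  · intro h i
    by_cases hi : i ∈ e.support
    · have := h i hi
      rw [Nat.le_div_iff_mul_le (Finsupp.mem_support_iff.1 hi |> Nat.pos_of_ne_zero)] at this
      simpa [mul_comm] using this
    · simp [Finsupp.notMem_support_iff.1 hi]

theorem sum_smul_le_iff {r : ℕ} {e : Fin r → (σ →₀ ℕ)}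
    (hdisj : ∀ l l', l ≠ l' → Disjoint (e l).support (e l').support)
    {a : Fin r → ℕ} {m : σ →₀ ℕ} :
    (∑ l, a l • e l) ≤ m ↔ ∀ l, a l • e l ≤ m := by
  constructor
  · intro h l
    refine le_trans ?_ h
    exact Finset.single_le_sum (f := fun l => a l • e l) (fun k _ => zero_le) (Finset.mem_univ l)
  · intro h
    rw [Finsupp.le_def]
    intro i
    rw [Finsupp.finset_sum_apply]
    by_cases hi : ∃ l0, i ∈ (e l0).support
    · obtain ⟨l0, hl0⟩ := hi
      have : (∑ l, (a l • e l) i) = (a l0 • e l0) i := by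
        refine Finset.sum_eq_single l0 (fun k _ hk => ?_) (fun h => absurd (Finset.mem_univ _) h)
        have : i ∉ (e k).support := fun hik =>
          Finset.disjoint_left.1 (hdisj k l0 hk) hik hl0
        simp [Finsupp.notMem_support_iff.1 this]
      rw [this]
      exact h l0 i
    · push_neg at hi
      have hz : (∑ l, (a l • e l) i) = 0 := by
        refine Finset.sum_eq_zero fun k _ => ?_
        simp [Finsupp.notMem_support_iff.1 (hi k)]
      simp only [Finsupp.smul_apply, smul_eq_mul] at hz
      simp [hz]

theorem exists_le_sum {ι : Type*} (s : Finset ι) (b : ι → ℕ) (n : ℕ) (h : n ≤ ∑ i ∈ s, b i) :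
    ∃ a : ι → ℕ, (∀ i, a i ≤ b i) ∧ (∑ i ∈ s, a i) = n := by
  classical
  induction s using Finset.induction_on generalizing n with
  | empty =>
    refine ⟨0, fun i => zero_le, ?_⟩
    simp only [Finset.sum_empty] at h ⊢
    omega
  | insert _ _ hx ih =>
    rename_i i s
    rw [Finset.sum_insert hx] at h
    obtain ⟨a, ha, hsum⟩ := ih (n - min (b i) n) (by omega)
    refine ⟨fun j => if j = i then min (b i) n else a j, fun j => ?_, ?_⟩
    · by_cases hj : j = i
      · rw [hj]; show (if i = i then min (b i) n else a i) ≤ b i; rw [if_pos rfl]; omega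
      · show (if j = i then min (b i) n else a j) ≤ b j
        rw [if_neg hj]; exact ha j
    · rw [Finset.sum_insert hx, if_pos rfl]
      have : (∑ j ∈ s, if j = i then min (b i) n else a j) = ∑ j ∈ s, a j := by
        refine Finset.sum_congr rfl fun j hj => ?_
        rw [if_neg (fun hji : j = i => hx (hji ▸ hj))]
      rw [this, hsum]
      omega

theorem cov_apow_iff {r : ℕ} {e : Fin r → (σ →₀ ℕ)} (hnee : ∀ l, (e l).support.Nonempty)
    (hdisj : ∀ l l', l ≠ l' → Disjoint (e l).support (e l').support)
    {n : ℕ} {m : σ →₀ ℕ} :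
    Cov (Apow e n) m ↔ n ≤ ∑ l, bb (e l) (hnee l) m := by
  constructor
  · rintro ⟨v, ⟨a, hsum, rfl⟩, hle⟩
    rw [sum_smul_le_iff hdisj] at hle
    calc n = ∑ l, a l := hsum.symm
    _ ≤ _ := Finset.sum_le_sum fun l _ => (smul_le_iff_le_bb (hnee l)).1 (hle l)
  · intro h
    obtain ⟨a, ha, hsum⟩ := exists_le_sum Finset.univ _ n h
    exact ⟨∑ l, a l • e l, ⟨a, hsum, rfl⟩,
      (sum_smul_le_iff hdisj).2 fun l => (smul_le_iff_le_bb (hnee l)).2 (ha l)⟩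

theorem le_filter_of_le {S : Finset σ} {a m : σ →₀ ℕ} (hS : ∀ i ∈ a.support, i ∈ S)
    (h : a ≤ m) : a ≤ m.filter (· ∈ S) := by
  classical
  intro i
  by_cases hi : i ∈ a.support
  · rw [Finsupp.filter_apply, if_pos (hS i hi)]
    exact h i
  · simp [Finsupp.notMem_support_iff.1 hi]

theorem cov_filter {S : Finset σ} {A : Set (σ →₀ ℕ)}
    (hA : ∀ a ∈ A, ∀ i ∈ a.support, i ∈ S) {m : σ →₀ ℕ} :
    Cov A m ↔ Cov A (m.filter (· ∈ S)) := by
  classical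
  constructor
  · rintro ⟨a, ha, hle⟩
    exact ⟨a, ha, le_filter_of_le (hA a ha) hle⟩
  · rintro ⟨a, ha, hle⟩
    refine ⟨a, ha, hle.trans ?_⟩
    intro i
    by_cases hi : i ∈ S
    · rw [Finsupp.filter_apply, if_pos hi]
    · rw [Finsupp.filter_apply, if_neg hi]; exact zero_le

/-- key primary-type lemma: if all exponents of the monomial ideal are supported in `S`,
`g` is not in the ideal, and `h` has a monomial free of `S`-variables,
then `h*g` is not in the ideal. -/
theorem mul_not_mem_mspan {S : Finset σ} {A : Set (σ →₀ ℕ)}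
    (hA : ∀ a ∈ A, ∀ i ∈ a.support, i ∈ S)
    {g h : MvPolynomial σ K} (hg : g ∉ mspan K A)
    (hh : ∃ μ ∈ h.support, μ.filter (· ∈ S) = 0) :
    h * g ∉ mspan K A := by
  classical
  set flt : (σ →₀ ℕ) → (σ →₀ ℕ) := fun m => m.filter (· ∈ S) with hflt
  obtain ⟨m0, hm0g, hm0c⟩ : ∃ m ∈ g.support, ¬ Cov A m := by
    by_contra hc; push_neg at hc; exact hg (mem_mspan.2 hc)
  set D : Finset (σ →₀ ℕ) :=
    (g.support.filter (fun m => ¬ Cov A m)).image flt with hD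
  have hDne : D.Nonempty := ⟨flt m0, Finset.mem_image_of_mem _ (Finset.mem_filter.2 ⟨hm0g, hm0c⟩)⟩
  obtain ⟨d, hdD, hdmin⟩ : ∃ d ∈ D, ∀ x ∈ D, ¬ x < d := by
    obtain ⟨d, hd⟩ := Finset.exists_minimal hDne
    exact ⟨d, hd.1, fun x hx hlt => hlt.not_ge (hd.2 hx hlt.le)⟩
  have hdnc : ¬ Cov A d := by
    obtain ⟨m, hm, rfl⟩ := Finset.mem_image.1 hdD
    have := (Finset.mem_filter.1 hm).2
    exact fun hcd => this ((cov_filter hA).2 hcd)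
  set g1 : MvPolynomial σ K := AddMonoidAlgebra.ofCoeff (Finsupp.filter (fun m => flt m = d) (AddMonoidAlgebra.coeff g)) with hg1
  set h0 : MvPolynomial σ K := AddMonoidAlgebra.ofCoeff (Finsupp.filter (fun μ => flt μ = 0) (AddMonoidAlgebra.coeff h)) with hh0
  have coeff_g1 : ∀ m, coeff m g1 = if flt m = d then coeff m g else 0 := by
    intro m; rw [hg1]; exact Finsupp.filter_apply _ _ m
  have coeff_h0 : ∀ μ, coeff μ h0 = if flt μ = 0 then coeff μ h else 0 := by
    intro μ; rw [hh0]; exact Finsupp.filter_apply _ _ μ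
  have hg1ne : g1 ≠ 0 := by
    obtain ⟨m, hm, rfl⟩ := Finset.mem_image.1 hdD
    intro hz
    have := coeff_g1 m
    rw [hz, if_pos rfl] at this
    exact Finsupp.mem_support_iff.1 (Finset.mem_filter.1 hm).1 this.symm
  have hh0ne : h0 ≠ 0 := by
    obtain ⟨μ, hμ, hμ0⟩ := hh
    intro hz
    have := coeff_h0 μ
    rw [hz, if_pos hμ0] at this
    exact Finsupp.mem_support_iff.1 hμ this.symm
  have hprodne : h0 * g1 ≠ 0 := mul_ne_zero hh0ne hg1ne
  obtain ⟨ν, hν⟩ := Finset.nonempty_iff_ne_empty.2 (fun hz => hprodne (MvPolynomial.support_eq_empty.1 hz))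
  have hsupp_g1 : g1.support = g.support.filter (fun m => flt m = d) := by
    rw [hg1]; exact Finsupp.support_filter _ _
  have hsupp_h0 : h0.support = h.support.filter (fun μ => flt μ = 0) := by
    rw [hh0]; exact Finsupp.support_filter _ _
  have hfltν : flt ν = d := by
    obtain ⟨μ, hμ, m, hm, rfl⟩ := Finset.mem_add.1 (MvPolynomial.support_mul h0 g1 hν)
    rw [hsupp_h0] at hμ
    rw [hsupp_g1] at hm
    have h1 : flt μ = 0 := (Finset.mem_filter.1 hμ).2
    have h2 : flt m = d := (Finset.mem_filter.1 hm).2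
    rw [hflt] at h1 h2 ⊢
    simp only at h1 h2 ⊢
    rw [Finsupp.filter_add, h1, h2, zero_add]
  have hcoeff : coeff ν (h * g) = coeff ν (h0 * g1) := by
    rw [MvPolynomial.coeff_mul, MvPolynomial.coeff_mul]
    refine Finset.sum_congr rfl fun x hx => ?_
    obtain ⟨μ, m⟩ := x
    have hxsum : μ + m = ν := Finset.HasAntidiagonal.mem_antidiagonal.1 hx
    by_cases hcase : flt m = d ∧ flt μ = 0
    · rw [coeff_g1, coeff_h0, if_pos hcase.1, if_pos hcase.2]
    · have hzero : coeff μ h * coeff m g = 0 := by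
        by_contra hne
        have hμh : coeff μ h ≠ 0 := fun hz => hne (by rw [hz, zero_mul])
        have hmg : coeff m g ≠ 0 := fun hz => hne (by rw [hz, mul_zero])
        have hmnc : ¬ Cov A m := by
          rintro ⟨a, ha, hle⟩
          refine hdnc ⟨a, ha, ?_⟩
          have : a ≤ flt m := le_filter_of_le (hA a ha) hle
          refine this.trans ?_
          rw [← hfltν, ← hxsum]
          rw [hflt]; simp only
          rw [Finsupp.filter_add]
          exact le_add_self
        have hmD : flt m ∈ D :=
          Finset.mem_image_of_mem _ (Finset.mem_filter.2 ⟨Finsupp.mem_support_iff.2 hmg, hmnc⟩)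
        have hle : flt m ≤ d := by
          rw [← hfltν, ← hxsum, hflt]; simp only
          rw [Finsupp.filter_add]
          exact le_add_self
        have heq : flt m = d := by
          rcases lt_or_eq_of_le hle with hlt | heq
          · exact absurd hlt (hdmin (flt m) hmD)
          · exact heq
        have hμ0 : flt μ = 0 := by
          have : flt μ + flt m = d := by
            rw [← hfltν, ← hxsum, hflt]; simp only; rw [Finsupp.filter_add]
          rw [heq] at this
          have := add_right_cancel (this.trans (zero_add d).symm)
          exact this
        exact hcase ⟨heq, hμ0⟩
      rw [hzero]
      by_cases h1 : flt m = d
      · have h2 : flt μ ≠ 0 := fun h2 => hcase ⟨h1, h2⟩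
        rw [coeff_h0, if_neg h2, zero_mul]
      · rw [coeff_g1, if_neg h1, mul_zero]
  intro hmem
  have hcov : Cov A ν := mem_mspan.1 hmem ν (by
    rw [MvPolynomial.mem_support_iff, hcoeff]
    exact MvPolynomial.mem_support_iff.1 hν)
  have : Cov A (flt ν) := (cov_filter hA).1 hcov
  rw [hfltν] at this
  exact hdnc this

/-- exponents of the "variable prime" ideal attached to a finite set of variables -/
def sgl (T : Finset σ) : Set (σ →₀ ℕ) := {v | ∃ i ∈ T, v = Finsupp.single i 1}

theorem single_le_iff {i : σ} {m : σ →₀ ℕ} : Finsupp.single i 1 ≤ m ↔ i ∈ m.support := by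
  constructor
  · intro h
    have := h i
    rw [Finsupp.single_eq_same] at this
    rw [Finsupp.mem_support_iff]
    omega
  · intro h j
    by_cases hj : j = i
    · subst hj
      rw [Finsupp.single_eq_same]
      exact Nat.one_le_iff_ne_zero.2 (Finsupp.mem_support_iff.1 h)
    · rw [Finsupp.single_eq_of_ne' (fun hij => hj hij.symm)]
      exact zero_le

theorem cov_sgl {T : Finset σ} {m : σ →₀ ℕ} :
    Cov (sgl T) m ↔ ∃ i ∈ T, i ∈ m.support := by
  constructor
  · rintro ⟨v, ⟨i, hi, rfl⟩, hle⟩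
    exact ⟨i, hi, single_le_iff.1 hle⟩
  · rintro ⟨i, hi, him⟩
    exact ⟨Finsupp.single i 1, ⟨i, hi, rfl⟩, single_le_iff.2 him⟩

theorem X_mem_sgl_iff {T : Finset σ} {j : σ} :
    (X j : MvPolynomial σ K) ∈ mspan K (sgl T) ↔ j ∈ T := by
  classical
  rw [X, mono_mem_mspan, cov_sgl]
  constructor
  · rintro ⟨i, hi, hsupp⟩
    rw [Finsupp.support_single_ne_zero j one_ne_zero, Finset.mem_singleton] at hsupp
    exact hsupp ▸ hi
  · intro h
    exact ⟨j, h, by rw [Finsupp.support_single_ne_zero j one_ne_zero]; simp⟩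

/-- the substitution killing the variables of T -/
noncomputable def killT (T : Finset σ) : MvPolynomial σ K →ₐ[K] MvPolynomial σ K :=
  aeval (fun i => if i ∈ T then 0 else X i)

theorem sub_killT_mem (T : Finset σ) (f : MvPolynomial σ K) :
    f - killT T f ∈ mspan K (sgl T) := by
  induction f using MvPolynomial.induction_on with
  | C a => simp [killT]
  | add p q hp hq =>
    have : p + q - killT T (p + q) = (p - killT T p) + (q - killT T q) := by
      rw [map_add]; ring
    rw [this]; exact Ideal.add_mem _ hp hq
  | mul_X p i hp =>
    rw [_root_.map_mul]
    by_cases hi : i ∈ T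
    · have hXi : (X i : MvPolynomial σ K) ∈ mspan K (sgl T) := X_mem_sgl_iff.2 hi
      have : killT T p * killT (K := K) T (X i) = 0 := by
        rw [killT, aeval_X, if_pos hi, mul_zero]
      rw [this, sub_zero]
      exact Ideal.mul_mem_left _ _ hXi
    · have : killT (K := K) T (X i) = X i := by rw [killT, aeval_X, if_neg hi]
      rw [this]
      have : p * X i - killT T p * X i = (p - killT T p) * X i := by ring
      rw [this]
      exact Ideal.mul_mem_right _ _ hp

theorem killT_eq_zero_of_mem {T : Finset σ} {f : MvPolynomial σ K}
    (hf : f ∈ mspan K (sgl T)) : killT T f = 0 := by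
  have : mspan K (sgl T) ≤ RingHom.ker (killT (K := K) T).toRingHom := by
    rw [mspan, Ideal.span_le]
    rintro x ⟨v, ⟨i, hi, rfl⟩, rfl⟩
    simp only [SetLike.mem_coe, RingHom.mem_ker]
    rw [show (monomial (Finsupp.single i 1) (1:K)) = X i from rfl]
    show killT T (X i) = 0
    rw [killT, aeval_X, if_pos hi]
  exact this hf

theorem mem_sgl_iff_killT {T : Finset σ} {f : MvPolynomial σ K} :
    f ∈ mspan K (sgl T) ↔ killT T f = 0 := by
  constructor
  · exact killT_eq_zero_of_mem
  · intro h
    have := sub_killT_mem (K := K) T f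
    rwa [h, sub_zero] at this

theorem sgl_isPrime (T : Finset σ) : (mspan K (sgl T)).IsPrime := by
  constructor
  · intro h
    have : killT (K := K) T 1 = 0 := killT_eq_zero_of_mem (h ▸ Submodule.mem_top)
    rw [map_one] at this
    exact one_ne_zero this
  · intro x y hxy
    rw [mem_sgl_iff_killT] at hxy ⊢
    rw [mem_sgl_iff_killT (f := y)]
    rw [_root_.map_mul] at hxy
    exact mul_eq_zero.1 hxy

theorem prime_contains_var {P : Ideal (MvPolynomial σ K)} (hP : P.IsPrime)
    {v : σ →₀ ℕ} (hv : (monomial v 1 : MvPolynomial σ K) ∈ P) :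
    ∃ i ∈ v.support, (X i : MvPolynomial σ K) ∈ P := by
  rw [monomial_eq] at hv
  rw [map_one, one_mul] at hv
  haveI := hP
  have : ∃ i ∈ v.support, (X i : MvPolynomial σ K) ^ v i ∈ P := by
    rw [Finsupp.prod] at hv
    exact Ideal.IsPrime.prod_mem_iff.1 hv
  obtain ⟨i, hi, hpow⟩ := this
  exact ⟨i, hi, hP.pow_mem_iff_mem _ (Nat.pos_of_ne_zero (Finsupp.mem_support_iff.1 hi)) |>.1 hpow⟩

/-- type of choices of one variable per block -/
def Ch {r : ℕ} (e : Fin r → (σ →₀ ℕ)) : Type _ := ∀ l : Fin r, {i // i ∈ (e l).support}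

noncomputable instance {r : ℕ} (e : Fin r → (σ →₀ ℕ)) : Fintype (Ch e) := by
  unfold Ch; infer_instance

/-- single-variable truncation of the generators along a choice -/
noncomputable def ec {r : ℕ} (e : Fin r → (σ →₀ ℕ)) (c : Ch e) : Fin r → (σ →₀ ℕ) :=
  fun l => Finsupp.single ((c l).1) (e l ((c l).1))

/-- the set of chosen variables -/
noncomputable def Tc {r : ℕ} (e : Fin r → (σ →₀ ℕ)) (c : Ch e) : Finset σ :=
  Finset.univ.image (fun l => (c l).1)

theorem hne {r : ℕ} {e : Fin r → (σ →₀ ℕ)} (he : ∀ l, e l ≠ 0) (l : Fin r) :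
    (e l).support.Nonempty := Finsupp.support_nonempty_iff.2 (he l)

theorem ec_supp {r : ℕ} (e : Fin r → (σ →₀ ℕ)) (c : Ch e) (l : Fin r) :
    (ec e c l).support = {(c l).1} := by
  rw [ec, Finsupp.support_single_ne_zero _ (Finsupp.mem_support_iff.1 (c l).2)]

theorem ec_supp_ne {r : ℕ} (e : Fin r → (σ →₀ ℕ)) (c : Ch e) (l : Fin r) :
    ((ec e c l)).support.Nonempty := by rw [ec_supp]; simp

theorem c_ne {r : ℕ} {e : Fin r → (σ →₀ ℕ)}
    (hdisj : ∀ l l', l ≠ l' → Disjoint (e l).support (e l').support)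
    {c : Ch e} {l l' : Fin r} (h : (c l).1 = (c l').1) : l = l' := by
  by_contra hll
  exact Finset.disjoint_left.1 (hdisj l l' hll) (c l).2 (h ▸ (c l').2)

theorem ec_disj {r : ℕ} {e : Fin r → (σ →₀ ℕ)}
    (hdisj : ∀ l l', l ≠ l' → Disjoint (e l).support (e l').support) (c : Ch e) :
    ∀ l l', l ≠ l' → Disjoint ((ec e c l)).support ((ec e c l')).support := by
  intro l l' hll
  rw [ec_supp, ec_supp, Finset.disjoint_singleton]
  exact fun h => hll (c_ne hdisj h)

theorem bb_ec {r : ℕ} (e : Fin r → (σ →₀ ℕ)) (c : Ch e) (l : Fin r) (m : σ →₀ ℕ) :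
    bb (ec e c l) (ec_supp_ne e c l) m = m ((c l).1) / e l ((c l).1) := by
  rw [bb]
  have hmem : (c l).1 ∈ (ec e c l).support := by rw [ec_supp]; simp
  have hval : ∀ i ∈ (ec e c l).support, m i / (ec e c l) i = m ((c l).1) / e l ((c l).1) := by
    intro i hi
    rw [ec_supp, Finset.mem_singleton] at hi
    subst hi
    rw [ec, Finsupp.single_eq_same]
  apply le_antisymm
  · exact le_of_le_of_eq (Finset.inf'_le _ hmem) (hval _ hmem)
  · exact Finset.le_inf' _ _ fun i hi => le_of_eq (hval i hi).symm

theorem cov_inter {r : ℕ} {e : Fin r → (σ →₀ ℕ)} (he : ∀ l, e l ≠ 0)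
    (hdisj : ∀ l l', l ≠ l' → Disjoint (e l).support (e l').support)
    {n : ℕ} {m : σ →₀ ℕ} :
    Cov (Apow e n) m ↔ ∀ c : Ch e, Cov (Apow (ec e c) n) m := by
  constructor
  · intro h c
    rw [cov_apow_iff (ec_supp_ne e c) (ec_disj hdisj c)]
    rw [cov_apow_iff (hne he) hdisj] at h
    refine h.trans (Finset.sum_le_sum fun l _ => ?_)
    rw [bb_ec]
    exact Finset.inf'_le _ (c l).2
  · intro h
    rw [cov_apow_iff (hne he) hdisj]
    have hc : ∀ l, ∃ i ∈ (e l).support, bb (e l) (hne he l) m = m i / e l i :=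
      fun l => Finset.exists_mem_eq_inf' (hne he l) _
    choose ci hci hbbi using hc
    obtain ⟨c0, hc0⟩ : ∃ c0 : Ch e, c0 = fun l => ⟨ci l, hci l⟩ := ⟨_, rfl⟩
    have := h c0
    rw [cov_apow_iff (ec_supp_ne e _) (ec_disj hdisj _)] at this
    refine this.trans (le_of_eq ?_)
    refine Finset.sum_congr rfl fun l _ => ?_
    rw [bb_ec, hbbi l]
    subst hc0
    rfl

theorem mem_pow_iff_all {r : ℕ} {e : Fin r → (σ →₀ ℕ)} (he : ∀ l, e l ≠ 0)
    (hdisj : ∀ l l', l ≠ l' → Disjoint (e l).support (e l').support)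
    {n : ℕ} {f : MvPolynomial σ K} :
    f ∈ mspan K (Apow e n) ↔ ∀ c : Ch e, f ∈ mspan K (Apow (ec e c) n) := by
  simp only [mem_mspan]
  constructor
  · intro h c m hm
    exact (cov_inter he hdisj).1 (h m hm) c
  · intro h m hm
    exact (cov_inter he hdisj).2 (fun c => h c m hm)

theorem classify {r : ℕ} {e : Fin r → (σ →₀ ℕ)} (he : ∀ l, e l ≠ 0)
    (hdisj : ∀ l l', l ≠ l' → Disjoint (e l).support (e l').support)
    {n : ℕ} {P : Ideal (MvPolynomial σ K)} {g : MvPolynomial σ K}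
    (hP : P.IsPrime) (hcolon : ∀ x, x ∈ P ↔ x * g ∈ mspan K (Apow e n)) :
    ∃ c : Ch e, P = mspan K (sgl (Tc e c)) := by
  set Ac : Ch e → Ideal (MvPolynomial σ K) :=
    fun c => (mspan K (Apow (ec e c) n)).colon (Ideal.span {g}) with hAc
  have hmemAc : ∀ (c : Ch e) (x : MvPolynomial σ K),
      x ∈ Ac c ↔ x * g ∈ mspan K (Apow (ec e c) n) := by
    intro c x
    rw [hAc]
    simp only
    rw [← Ideal.submodule_span_eq, Submodule.mem_colon_span_singleton, smul_eq_mul]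
  have hPinf : P = Finset.univ.inf Ac := by
    ext x
    rw [Submodule.mem_finsetInf, hcolon, mem_pow_iff_all he hdisj]
    constructor
    · intro h c _; exact (hmemAc c x).2 (h c)
    · intro h c; exact (hmemAc c x).1 (h c (Finset.mem_univ c))
  obtain ⟨c, _, hcle⟩ := (Ideal.IsPrime.inf_le' hP).1 (le_of_eq hPinf.symm)
  have hPc : P = Ac c := le_antisymm (hPinf ▸ Finset.inf_le (Finset.mem_univ c)) hcle
  have hgn : g ∉ mspan K (Apow (ec e c) n) := by
    intro hg
    have : (1 : MvPolynomial σ K) ∈ P := by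
      rw [hPc, hmemAc, one_mul]; exact hg
    exact hP.ne_top (Ideal.eq_top_iff_one _ |>.2 this)
  have hPQ : P ≤ mspan K (sgl (Tc e c)) := by
    intro x hx
    by_contra hxQ
    have hfree : ∃ μ ∈ x.support, μ.filter (· ∈ Tc e c) = 0 := by
      rw [mem_mspan] at hxQ
      push_neg at hxQ
      obtain ⟨μ, hμ, hnc⟩ := hxQ
      refine ⟨μ, hμ, ?_⟩
      rw [cov_sgl] at hnc
      push_neg at hnc
      ext i
      rw [Finsupp.filter_apply]
      split
      · next hi => exact Finsupp.notMem_support_iff.1 (hnc i hi)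
      · rfl
    have hA : ∀ a ∈ Apow (ec e c) n, ∀ i ∈ a.support, i ∈ Tc e c := by
      rintro a ⟨b, hb, rfl⟩ i hi
      obtain ⟨l, _, hl⟩ := Finsupp.mem_support_finset_sum i hi
      have hsub : (b l • ec e c l).support ⊆ (ec e c l).support := by
        intro j hj
        rw [Finsupp.mem_support_iff] at hj ⊢
        intro hz
        apply hj
        rw [Finsupp.smul_apply, hz, smul_zero]
      have : i ∈ (ec e c l).support := hsub hl
      rw [ec_supp, Finset.mem_singleton] at this
      rw [Tc, Finset.mem_image]
      exact ⟨l, Finset.mem_univ l, this.symm⟩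
    exact mul_not_mem_mspan hA hgn hfree ((hmemAc c x).1 (hPc ▸ hx))
  have hXP : ∀ l, (X ((c l).1) : MvPolynomial σ K) ∈ P := by
    intro l
    have hmono : (monomial (n • e l) 1 : MvPolynomial σ K) ∈ P := by
      rw [hcolon]
      refine Ideal.mul_mem_right _ _ (mono_mem_mspan.2 ?_)
      exact ⟨n • e l, ⟨Pi.single l n, by simp, (single_sum_smul e l n).symm⟩, le_refl _⟩
    obtain ⟨i, hi, hXi⟩ := prime_contains_var hP hmono
    have hisupp : i ∈ (e l).support := by
      rw [Finsupp.mem_support_iff] at hi ⊢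
      intro hz
      apply hi
      rw [Finsupp.smul_apply, hz, smul_zero]
    have hiT : i ∈ Tc e c := X_mem_sgl_iff.1 (hPQ hXi)
    rw [Tc, Finset.mem_image] at hiT
    obtain ⟨k, _, hk⟩ := hiT
    have hkl : k = l := by
      by_contra hkl
      exact Finset.disjoint_left.1 (hdisj k l hkl) (hk ▸ (c k).2) hisupp
    have hcli : (c l).1 = i := by rw [← hkl]; exact hk
    rw [hcli]
    exact hXi
  have hQP : mspan K (sgl (Tc e c)) ≤ P := by
    rw [mspan, Ideal.span_le]
    rintro x ⟨v, ⟨i, hiT, rfl⟩, rfl⟩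
    rw [Tc, Finset.mem_image] at hiT
    obtain ⟨l, _, rfl⟩ := hiT
    exact hXP l
  exact ⟨c, le_antisymm hPQ hQP⟩

theorem classifyRad {r : ℕ} {e : Fin r → (σ →₀ ℕ)} (he : ∀ l, e l ≠ 0)
    (hdisj : ∀ l l', l ≠ l' → Disjoint (e l).support (e l').support)
    {n : ℕ} {P : Ideal (MvPolynomial σ K)} {g : MvPolynomial σ K}
    (hP : P.IsPrime) (hcolon : ∀ x, x ∈ P ↔ ∃ k : ℕ, x ^ k * g ∈ mspan K (Apow e n)) :
    ∃ c : Ch e, P = mspan K (sgl (Tc e c)) := by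
  set Ac : Ch e → Ideal (MvPolynomial σ K) :=
    fun c => (mspan K (Apow (ec e c) n)).colon (Ideal.span {g}) with hAc
  have hmemAc : ∀ (c : Ch e) (x : MvPolynomial σ K),
      x ∈ Ac c ↔ x * g ∈ mspan K (Apow (ec e c) n) := by
    intro c x
    rw [hAc]
    simp only
    rw [← Ideal.submodule_span_eq, Submodule.mem_colon_span_singleton, smul_eq_mul]
  have hPinf : P = Finset.univ.inf (fun c => (Ac c).radical) := by
    ext x
    rw [Submodule.mem_finsetInf, hcolon]
    constructor
    · rintro ⟨k, hk⟩ c _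
      exact Ideal.mem_radical_iff.2 ⟨k, (hmemAc c _).2 ((mem_pow_iff_all he hdisj).1 hk c)⟩
    · intro h
      choose k hk using fun c => Ideal.mem_radical_iff.1 (h c (Finset.mem_univ c))
      refine ⟨∑ c, k c, (mem_pow_iff_all he hdisj).2 fun c => ?_⟩
      have h1 := (hmemAc c _).1 (hk c)
      have h2 : x ^ (∑ c, k c) * g = x ^ (∑ c, k c - k c) * (x ^ k c * g) := by
        rw [← mul_assoc, ← pow_add, Nat.sub_add_cancel
          (Finset.single_le_sum (f := k) (fun _ _ => Nat.zero_le _) (Finset.mem_univ c))]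
      rw [h2]
      exact Ideal.mul_mem_left _ _ h1
  obtain ⟨c, _, hcle⟩ := (Ideal.IsPrime.inf_le' hP).1 (le_of_eq hPinf.symm)
  have hPc : P = (Ac c).radical :=
    le_antisymm ((le_of_eq hPinf).trans
      (Finset.inf_le (f := fun c => (Ac c).radical) (Finset.mem_univ c))) hcle
  have hgn : g ∉ mspan K (Apow (ec e c) n) := by
    intro hg
    have : (1 : MvPolynomial σ K) ∈ P := by
      rw [hPc]; exact Ideal.le_radical ((hmemAc c 1).2 (by rw [one_mul]; exact hg))
    exact hP.ne_top (Ideal.eq_top_iff_one _ |>.2 this)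
  have hQprime := sgl_isPrime (K := K) (Tc e c)
  have hPQ : P ≤ mspan K (sgl (Tc e c)) := by
    intro x hx
    by_contra hxQ
    have hx' : x ∈ (Ac c).radical := by rw [← hPc]; exact hx
    obtain ⟨k, hk⟩ := Ideal.mem_radical_iff.1 hx'
    have hxkQ : x ^ k ∉ mspan K (sgl (Tc e c)) := fun h => hxQ (hQprime.mem_of_pow_mem k h)
    have hfree : ∃ μ ∈ (x ^ k).support, μ.filter (· ∈ Tc e c) = 0 := by
      rw [mem_mspan] at hxkQ
      push_neg at hxkQ
      obtain ⟨μ, hμ, hnc⟩ := hxkQ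
      refine ⟨μ, hμ, ?_⟩
      rw [cov_sgl] at hnc
      push_neg at hnc
      ext i
      rw [Finsupp.filter_apply]
      split
      · next hi => exact Finsupp.notMem_support_iff.1 (hnc i hi)
      · rfl
    have hA : ∀ a ∈ Apow (ec e c) n, ∀ i ∈ a.support, i ∈ Tc e c := by
      rintro a ⟨b, hb, rfl⟩ i hi
      obtain ⟨l, _, hl⟩ := Finsupp.mem_support_finset_sum i hi
      have hsub : (b l • ec e c l).support ⊆ (ec e c l).support := by
        intro j hj
        rw [Finsupp.mem_support_iff] at hj ⊢
        intro hz
        apply hj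
        rw [Finsupp.smul_apply, hz, smul_zero]
      have : i ∈ (ec e c l).support := hsub hl
      rw [ec_supp, Finset.mem_singleton] at this
      rw [Tc, Finset.mem_image]
      exact ⟨l, Finset.mem_univ l, this.symm⟩
    exact mul_not_mem_mspan hA hgn hfree ((hmemAc c (x ^ k)).1 hk)
  have hXP : ∀ l, (X ((c l).1) : MvPolynomial σ K) ∈ P := by
    intro l
    have hmono : (monomial (n • e l) 1 : MvPolynomial σ K) ∈ P := by
      rw [hcolon]
      refine ⟨1, ?_⟩
      rw [pow_one]
      refine Ideal.mul_mem_right _ _ (mono_mem_mspan.2 ?_)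
      exact ⟨n • e l, ⟨Pi.single l n, by simp, (single_sum_smul e l n).symm⟩, le_refl _⟩
    obtain ⟨i, hi, hXi⟩ := prime_contains_var hP hmono
    have hisupp : i ∈ (e l).support := by
      rw [Finsupp.mem_support_iff] at hi ⊢
      intro hz
      apply hi
      rw [Finsupp.smul_apply, hz, smul_zero]
    have hiT : i ∈ Tc e c := X_mem_sgl_iff.1 (hPQ hXi)
    rw [Tc, Finset.mem_image] at hiT
    obtain ⟨k, _, hk⟩ := hiT
    have hkl : k = l := by
      by_contra hkl
      exact Finset.disjoint_left.1 (hdisj k l hkl) (hk ▸ (c k).2) hisupp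
    have hcli : (c l).1 = i := by rw [← hkl]; exact hk
    rw [hcli]
    exact hXi
  have hQP : mspan K (sgl (Tc e c)) ≤ P := by
    rw [mspan, Ideal.span_le]
    rintro x ⟨v, ⟨i, hiT, rfl⟩, rfl⟩
    rw [Tc, Finset.mem_image] at hiT
    obtain ⟨l, _, rfl⟩ := hiT
    exact hXP l
  exact ⟨c, le_antisymm hPQ hQP⟩

/-- the witness exponent -/
noncomputable def wit {r : ℕ} (e : Fin r → (σ →₀ ℕ)) (c : Ch e) (m0 : Fin r) (n : ℕ) : σ →₀ ℕ :=
  (n - 1) • e m0 + ∑ l, (e l - Finsupp.single ((c l).1) 1)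

theorem single_le_e {r : ℕ} {e : Fin r → (σ →₀ ℕ)} {c : Ch e} (l : Fin r) :
    Finsupp.single ((c l).1) 1 ≤ e l :=
  single_le_iff.2 (c l).2

theorem c_mem_supp_iff {r : ℕ} {e : Fin r → (σ →₀ ℕ)}
    (hdisj : ∀ l l', l ≠ l' → Disjoint (e l).support (e l').support)
    {c : Ch e} {k l : Fin r} (h : ((c k).1) ∈ (e l).support) : k = l := by
  by_contra hkl
  exact Finset.disjoint_left.1 (hdisj k l hkl) (c k).2 h

theorem e_apply_c_eq_zero {r : ℕ} {e : Fin r → (σ →₀ ℕ)}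
    (hdisj : ∀ l l', l ≠ l' → Disjoint (e l).support (e l').support)
    {c : Ch e} {k l : Fin r} (h : k ≠ l) : e l ((c k).1) = 0 := by
  rw [← Finsupp.notMem_support_iff]
  intro hmem
  exact h (c_mem_supp_iff hdisj hmem)

theorem wit_colon {r : ℕ} {e : Fin r → (σ →₀ ℕ)}
    (hdisj : ∀ l l', l ≠ l' → Disjoint (e l).support (e l').support)
    {c : Ch e} {m0 : Fin r} {n : ℕ} (hn : 1 ≤ n) (x : MvPolynomial σ K) :
    x * monomial (wit e c m0 n) 1 ∈ mspan K (Apow e n) ↔ x ∈ mspan K (sgl (Tc e c)) := by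
  constructor
  · intro hx
    rw [mem_mspan]
    intro μ hμ
    by_contra hnc
    rw [cov_sgl] at hnc
    push_neg at hnc
    have hμc : ∀ l, μ ((c l).1) = 0 := by
      intro l
      have := hnc ((c l).1) (by rw [Tc, Finset.mem_image]; exact ⟨l, Finset.mem_univ l, rfl⟩)
      exact Finsupp.notMem_support_iff.1 this
    have hco : coeff (μ + wit e c m0 n) (x * monomial (wit e c m0 n) (1:K)) = coeff μ x := by
      rw [MvPolynomial.coeff_mul_monomial, mul_one]
    have hsupp : μ + wit e c m0 n ∈ (x * monomial (wit e c m0 n) (1:K)).support := by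
      rw [MvPolynomial.mem_support_iff, hco]
      exact MvPolynomial.mem_support_iff.1 hμ
    obtain ⟨v, ⟨a, hsum, rfl⟩, hle⟩ := mem_mspan.1 hx _ hsupp
    rw [sum_smul_le_iff hdisj] at hle
    have hbound : ∀ k, a k * e k ((c k).1) ≤ μ ((c k).1) + wit e c m0 n ((c k).1) := by
      intro k
      have := hle k ((c k).1)
      simpa using this
    have hwit_at : ∀ k, wit e c m0 n ((c k).1)
        = (n - 1) * e m0 ((c k).1) + (e k ((c k).1) - 1) := by
      intro k
      rw [wit, Finsupp.add_apply, Finsupp.smul_apply, smul_eq_mul]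
      congr 1
      rw [Finsupp.finset_sum_apply]
      rw [Finset.sum_eq_single k]
      · rw [Finsupp.tsub_apply, Finsupp.single_eq_same]
      · intro l _ hlk
        rw [Finsupp.tsub_apply, e_apply_c_eq_zero hdisj (fun h => hlk h.symm),
            Finsupp.single_eq_of_ne', Nat.zero_sub]
        intro h
        exact hlk (c_mem_supp_iff hdisj (h ▸ (c k).2)) |>.elim
      · intro h; exact absurd (Finset.mem_univ k) h
    have hak : ∀ k, k ≠ m0 → a k = 0 := by
      intro k hk
      have h1 := hbound k
      rw [hwit_at, hμc, e_apply_c_eq_zero hdisj hk, Nat.mul_zero] at h1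
      have hek : 1 ≤ e k ((c k).1) := Nat.one_le_iff_ne_zero.2 (Finsupp.mem_support_iff.1 (c k).2)
      by_contra ha
      have h2 : e k ((c k).1) ≤ a k * e k ((c k).1) :=
        Nat.le_mul_of_pos_left _ (by omega)
      omega
    have ham : a m0 ≤ n - 1 := by
      have h1 := hbound m0
      rw [hwit_at, hμc] at h1
      have hek : 1 ≤ e m0 ((c m0).1) :=
        Nat.one_le_iff_ne_zero.2 (Finsupp.mem_support_iff.1 (c m0).2)
      by_contra hcon
      have h2 : n ≤ a m0 := by omega
      have h3 : n * e m0 ((c m0).1) ≤ a m0 * e m0 ((c m0).1) :=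
        Nat.mul_le_mul_right _ h2
      have h4 : (n - 1) * e m0 ((c m0).1) + e m0 ((c m0).1) = n * e m0 ((c m0).1) := by
        have : (n - 1) + 1 = n := Nat.sub_add_cancel hn
        calc (n - 1) * e m0 ((c m0).1) + e m0 ((c m0).1)
            = ((n-1) + 1) * e m0 ((c m0).1) := by rw [add_mul, one_mul]
          _ = n * e m0 ((c m0).1) := by rw [this]
      omega
    have : (∑ k, a k) ≤ n - 1 := by
      rw [Finset.sum_eq_single m0]
      · exact ham
      · intro k _ hk; exact hak k hk
      · intro h; exact absurd (Finset.mem_univ m0) h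
    omega
  · intro hx
    rw [mem_mspan]
    intro m' hm'
    obtain ⟨μ, hμ, w', hw', rfl⟩ := Finset.mem_add.1 (MvPolynomial.support_mul _ _ hm')
    rw [MvPolynomial.support_monomial, if_neg (one_ne_zero (α := K))] at hw'
    rw [Finset.mem_singleton] at hw'
    subst hw'
    obtain ⟨v, ⟨l, hlT, rfl⟩, hlee⟩ := mem_mspan.1 hx μ hμ
    rw [Tc, Finset.mem_image] at hlT
    obtain ⟨l, _, rfl⟩ := hlT
    set aw : Fin r → ℕ := fun k => (Pi.single m0 (n-1) : Fin r → ℕ) k + (Pi.single l 1 : Fin r → ℕ) k with haw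
    refine ⟨∑ k, aw k • e k, ⟨aw, ?_, rfl⟩, ?_⟩
    · rw [haw]
      rw [Finset.sum_add_distrib, Finset.sum_pi_single', Finset.sum_pi_single']
      rw [if_pos (Finset.mem_univ _), if_pos (Finset.mem_univ _)]
      omega
    · have hsplit : (∑ k, aw k • e k) = (n-1) • e m0 + e l := by
        have hterm : ∀ k : Fin r, aw k • e k
            = (Pi.single m0 (n-1) : Fin r → ℕ) k • e k + (Pi.single l 1 : Fin r → ℕ) k • e k :=
          fun k => add_smul _ _ _
        rw [Finset.sum_congr rfl (fun k _ => hterm k), Finset.sum_add_distrib,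
            single_sum_smul, single_sum_smul, one_smul]
      rw [hsplit]
      have h1 : e l ≤ (∑ k, (e k - Finsupp.single ((c k).1) 1)) + μ := by
        have h2 : (e l - Finsupp.single ((c l).1) 1) + Finsupp.single ((c l).1) 1 = e l :=
          tsub_add_cancel_of_le (single_le_e l)
        calc e l = (e l - Finsupp.single ((c l).1) 1) + Finsupp.single ((c l).1) 1 := h2.symm
          _ ≤ (e l - Finsupp.single ((c l).1) 1) + μ := add_le_add_right hlee _
          _ ≤ (∑ k, (e k - Finsupp.single ((c k).1) 1)) + μ := by
              refine add_le_add_left ?_ μ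
              exact Finset.single_le_sum (f := fun k => e k - Finsupp.single ((c k).1) 1)
                (fun k _ => zero_le) (Finset.mem_univ l)
      calc (n-1) • e m0 + e l
          ≤ (n-1) • e m0 + ((∑ k, (e k - Finsupp.single ((c k).1) 1)) + μ) :=
            add_le_add_right h1 _
        _ = μ + wit e c m0 n := by rw [wit]; abel

theorem deg_lower {r : ℕ} (hr : 0 < r) {e : Fin r → (σ →₀ ℕ)} (he : ∀ l, e l ≠ 0)
    (hdisj : ∀ l l', l ≠ l' → Disjoint (e l).support (e l').support)
    {n : ℕ} (hn : 1 ≤ n) {f : MvPolynomial σ K}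
    (hf : f ∉ mspan K (Apow e n))
    (hX : ∀ l : Fin r, ∃ i ∈ (e l).support, (X i : MvPolynomial σ K) * f ∈ mspan K (Apow e n)) :
    ∃ m ∈ f.support,
      (n - 1) * (Finset.univ.inf' ⟨⟨0, hr⟩, Finset.mem_univ _⟩ (fun l => (e l).degree))
        + (∑ l, (e l).degree) ≤ m.degree + r := by
  obtain ⟨m, hmf, hmnc⟩ : ∃ m ∈ f.support, ¬ Cov (Apow e n) m := by
    by_contra hc; push_neg at hc; exact hf (mem_mspan.2 hc)
  refine ⟨m, hmf, ?_⟩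
  have hNle : (∑ l, bb (e l) (hne he l) m) ≤ n - 1 := by
    rw [cov_apow_iff (hne he) hdisj] at hmnc
    omega
  choose i hi hXi using hX
  have hcovl : ∀ l, n ≤ ∑ k, bb (e k) (hne he k) (Finsupp.single (i l) 1 + m) := by
    intro l
    have hsupp : Finsupp.single (i l) 1 + m ∈ ((X (i l) : MvPolynomial σ K) * f).support := by
      rw [MvPolynomial.mem_support_iff]
      have hXdef : (X (i l) : MvPolynomial σ K) = monomial (Finsupp.single (i l) 1) 1 := rfl
      have hcm : coeff (Finsupp.single (i l) 1 + m)
            ((monomial (Finsupp.single (i l) 1) 1 : MvPolynomial σ K) * f)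
          = 1 * coeff m f := MvPolynomial.coeff_monomial_mul _ _ _ _
      rw [hXdef, hcm, one_mul]
      exact MvPolynomial.mem_support_iff.1 hmf
    have := mem_mspan.1 (hXi l) _ hsupp
    rwa [cov_apow_iff (hne he) hdisj] at this
  have hbb_eq : ∀ l, ∀ k ∈ Finset.univ.erase l,
      bb (e k) (hne he k) (Finsupp.single (i l) 1 + m) = bb (e k) (hne he k) m := by
    intro l k hk
    have hkl : k ≠ l := Finset.ne_of_mem_erase hk
    rw [bb, bb]
    refine Finset.inf'_congr _ rfl (fun j hj => ?_)
    have hji : j ≠ i l := by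
      intro hj'
      exact Finset.disjoint_left.1 (hdisj k l hkl) hj (hj' ▸ hi l)
    rw [Finsupp.add_apply, Finsupp.single_eq_of_ne' (fun h => hji h.symm), zero_add]
  have hbb_le : ∀ l, bb (e l) (hne he l) (Finsupp.single (i l) 1 + m)
      ≤ bb (e l) (hne he l) m + 1 := by
    intro l
    obtain ⟨j, hj, hjeq⟩ := Finset.exists_mem_eq_inf' (hne he l) (fun j => m j / e l j)
    have h1 : bb (e l) (hne he l) (Finsupp.single (i l) 1 + m)
        ≤ ((Finsupp.single (i l) 1 + m : σ →₀ ℕ)) j / e l j := Finset.inf'_le _ hj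
    have h2 : ((Finsupp.single (i l) 1 + m : σ →₀ ℕ)) j ≤ m j + 1 := by
      rw [Finsupp.add_apply, add_comm]
      have : (Finsupp.single (i l) 1 : σ →₀ ℕ) j ≤ 1 := by
        rw [Finsupp.single_apply]
        split <;> omega
      omega
    have hpos : 0 < e l j := Nat.pos_of_ne_zero (Finsupp.mem_support_iff.1 hj)
    have h3 : (m j + 1) / e l j ≤ m j / e l j + 1 := by
      calc (m j + 1) / e l j ≤ (m j + e l j) / e l j :=
            Nat.div_le_div_right (by omega)
        _ = m j / e l j + 1 := Nat.add_div_right _ hpos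
    have h4 : bb (e l) (hne he l) m = m j / e l j := by rw [bb, hjeq]
    calc bb (e l) (hne he l) (Finsupp.single (i l) 1 + m)
        ≤ ((Finsupp.single (i l) 1 + m : σ →₀ ℕ)) j / e l j := h1
      _ ≤ (m j + 1) / e l j := Nat.div_le_div_right h2
      _ ≤ m j / e l j + 1 := h3
      _ = bb (e l) (hne he l) m + 1 := by rw [h4]
  have hsplits : ∀ l,
      (∑ k, bb (e k) (hne he k) (Finsupp.single (i l) 1 + m))
        = bb (e l) (hne he l) (Finsupp.single (i l) 1 + m)
          + ∑ k ∈ Finset.univ.erase l, bb (e k) (hne he k) m := by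
    intro l
    rw [← Finset.add_sum_erase _ _ (Finset.mem_univ l)]
    congr 1
    exact Finset.sum_congr rfl (hbb_eq l)
  have hsplitm : ∀ l : Fin r,
      (∑ k, bb (e k) (hne he k) m)
        = bb (e l) (hne he l) m + ∑ k ∈ Finset.univ.erase l, bb (e k) (hne he k) m :=
    fun l => (Finset.add_sum_erase _ _ (Finset.mem_univ l)).symm
  have hkey : ∀ l, bb (e l) (hne he l) m + 1
      ≤ bb (e l) (hne he l) (Finsupp.single (i l) 1 + m) := by
    intro l
    have h1 := hcovl l
    have h2 := hsplits l
    have h3 := hsplitm l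
    have h4 := hbb_le l
    omega
  have hNge : n - 1 ≤ ∑ l, bb (e l) (hne he l) m := by
    have h1 := hcovl ⟨0, hr⟩
    have h2 := hsplits ⟨0, hr⟩
    have h3 := hsplitm ⟨0, hr⟩
    have h4 := hbb_le ⟨0, hr⟩
    omega
  have hpt : ∀ l, ∀ j ∈ (e l).support,
      (bb (e l) (hne he l) m + 1) * e l j ≤ m j + (Finsupp.single (i l) 1 : σ →₀ ℕ) j := by
    intro l j hj
    have h1 : bb (e l) (hne he l) m + 1
        ≤ ((Finsupp.single (i l) 1 + m : σ →₀ ℕ)) j / e l j :=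
      le_trans (hkey l) (Finset.inf'_le _ hj)
    have hpos : 0 < e l j := Nat.pos_of_ne_zero (Finsupp.mem_support_iff.1 hj)
    have := (Nat.le_div_iff_mul_le hpos).1 h1
    rw [Finsupp.add_apply] at this
    omega
  have hblock : ∀ l, (bb (e l) (hne he l) m + 1) * (e l).degree
      ≤ (∑ j ∈ (e l).support, m j) + 1 := by
    intro l
    have h1 : (∑ j ∈ (e l).support, (bb (e l) (hne he l) m + 1) * e l j)
        ≤ ∑ j ∈ (e l).support, (m j + (Finsupp.single (i l) 1 : σ →₀ ℕ) j) :=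
      Finset.sum_le_sum (hpt l)
    rw [← Finset.mul_sum, Finset.sum_add_distrib] at h1
    have h2 : (∑ j ∈ (e l).support, (Finsupp.single (i l) 1 : σ →₀ ℕ) j) = 1 := by
      rw [Finset.sum_eq_single (i l)]
      · rw [Finsupp.single_eq_same]
      · intro j _ hji
        rw [Finsupp.single_eq_of_ne' (fun h => hji h.symm)]
      · intro h; exact absurd (hi l) h
    rw [h2] at h1
    exact h1
  have hsumblocks : (∑ l, ∑ j ∈ (e l).support, m j) ≤ m.degree := by
    have hpair : (↑(Finset.univ : Finset (Fin r)) : Set (Fin r)).PairwiseDisjoint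
        (fun l => (e l).support) := by
      intro a _ b _ hab
      exact hdisj a b hab
    rw [← Finset.sum_biUnion hpair]
    calc (∑ j ∈ Finset.univ.biUnion (fun l => (e l).support), m j)
        ≤ ∑ j ∈ Finset.univ.biUnion (fun l : Fin r => (e l).support) ∪ m.support, m j :=
          Finset.sum_le_sum_of_subset Finset.subset_union_left
      _ = ∑ j ∈ m.support, m j := by
          refine (Finset.sum_subset Finset.subset_union_right (fun x _ hx => ?_)).symm
          exact Finsupp.notMem_support_iff.1 hx
      _ = m.degree := rfl
  have hmain : (∑ l, (bb (e l) (hne he l) m + 1) * (e l).degree) ≤ m.degree + r := by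
    calc (∑ l, (bb (e l) (hne he l) m + 1) * (e l).degree)
        ≤ ∑ l, ((∑ j ∈ (e l).support, m j) + 1) := Finset.sum_le_sum fun l _ => hblock l
      _ = (∑ l, ∑ j ∈ (e l).support, m j) + r := by
          rw [Finset.sum_add_distrib]
          simp
      _ ≤ m.degree + r := by omega
  refine le_trans ?_ hmain
  set α := Finset.univ.inf' (⟨⟨0, hr⟩, Finset.mem_univ _⟩ : Finset.univ.Nonempty)
    (fun l : Fin r => (e l).degree) with hα
  have h1 : ∀ l : Fin r, bb (e l) (hne he l) m * α + (e l).degree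
      ≤ (bb (e l) (hne he l) m + 1) * (e l).degree := by
    intro l
    have hαle : α ≤ (e l).degree := Finset.inf'_le _ (Finset.mem_univ l)
    have : bb (e l) (hne he l) m * α ≤ bb (e l) (hne he l) m * (e l).degree :=
      Nat.mul_le_mul_left _ hαle
    calc bb (e l) (hne he l) m * α + (e l).degree
        ≤ bb (e l) (hne he l) m * (e l).degree + (e l).degree := by omega
      _ = (bb (e l) (hne he l) m + 1) * (e l).degree := by ring
  calc (n - 1) * α + (∑ l, (e l).degree)
      ≤ (∑ l, bb (e l) (hne he l) m) * α + (∑ l, (e l).degree) := by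
        have := Nat.mul_le_mul_right α hNge
        omega
    _ = ∑ l, (bb (e l) (hne he l) m * α + (e l).degree) := by
        rw [Finset.sum_add_distrib, ← Finset.sum_mul]
    _ ≤ ∑ l, (bb (e l) (hne he l) m + 1) * (e l).degree :=
        Finset.sum_le_sum fun l _ => h1 l

theorem degree_single_one (i : σ) : (Finsupp.single i 1 : σ →₀ ℕ).degree = 1 := by
  classical
  rw [Finsupp.degree_apply, Finsupp.support_single_ne_zero _ one_ne_zero]
  simp

theorem weight_single_one (i : σ) : Finsupp.weight (1 : σ → ℕ) (Finsupp.single i 1) = 1 := by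
  rw [show (1 : σ → ℕ) = fun _ => 1 from rfl, ← Finsupp.degree_eq_weight_one]
  exact degree_single_one i

theorem wit_degree {r : ℕ} {e : Fin r → (σ →₀ ℕ)} (c : Ch e) (m0 : Fin r) (n : ℕ) :
    (wit e c m0 n).degree + r = (n - 1) * (e m0).degree + ∑ l, (e l).degree := by
  have hper : ∀ l : Fin r,
      Finsupp.weight (1 : σ → ℕ) (e l - Finsupp.single ((c l).1) 1) + 1
        = Finsupp.weight (1 : σ → ℕ) (e l) := by
    intro l
    have h2 : (e l - Finsupp.single ((c l).1) 1) + Finsupp.single ((c l).1) 1 = e l :=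
      tsub_add_cancel_of_le (single_le_e l)
    calc Finsupp.weight (1 : σ → ℕ) (e l - Finsupp.single ((c l).1) 1) + 1
        = Finsupp.weight (1 : σ → ℕ) (e l - Finsupp.single ((c l).1) 1)
            + Finsupp.weight (1 : σ → ℕ) (Finsupp.single ((c l).1) 1) := by
          rw [weight_single_one]
      _ = Finsupp.weight (1 : σ → ℕ) ((e l - Finsupp.single ((c l).1) 1) + Finsupp.single ((c l).1) 1) := by
          rw [map_add]
      _ = Finsupp.weight (1 : σ → ℕ) (e l) := by rw [h2]
  rw [Finsupp.degree_eq_weight_one, show (fun _ => 1 : σ → ℕ) = 1 from rfl, wit, map_add, map_nsmul, map_sum, smul_eq_mul, add_assoc]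
  congr 1
  calc (∑ l, Finsupp.weight (1 : σ → ℕ) (e l - Finsupp.single ((c l).1) 1)) + r
      = ∑ l : Fin r, (Finsupp.weight (1 : σ → ℕ) (e l - Finsupp.single ((c l).1) 1) + 1) := by
        rw [Finset.sum_add_distrib]
        simp
    _ = ∑ l, Finsupp.weight (1 : σ → ℕ) (e l) := Finset.sum_congr rfl fun l _ => hper l

theorem pow_gen_mem {r : ℕ} {e : Fin r → (σ →₀ ℕ)} (n : ℕ) (l : Fin r) :
    (monomial (n • e l) 1 : MvPolynomial σ K) ∈ mspan K (Apow e n) :=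
  mono_mem_mspan.2 ⟨n • e l, ⟨Pi.single l n, by simp, (single_sum_smul e l n).symm⟩, le_refl _⟩

theorem supp_smul_subset {n : ℕ} (hn : 1 ≤ n) (v : σ →₀ ℕ) {i : σ}
    (hi : i ∈ (n • v).support) : i ∈ v.support := by
  rw [Finsupp.mem_support_iff] at hi ⊢
  intro hz
  apply hi
  rw [Finsupp.smul_apply, hz, smul_zero]

end CIv

/-- For a complete intersection monomial ideal `I = ⟨u_1,…,u_r⟩`, for every associated prime
`P` of `I` and all `n ≥ 1`, `v(I^n) = v_P(I^n) = n·α(I) + v(I) − α(I)`, where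
`v(I) = ∑ deg u_i − r` and `α(I)` is the least generator degree. -/
theorem vnumber_pow_complete_intersection
    {K : Type*} [Field K] {σ : Type*} (r : ℕ) (hr : 0 < r) (e : Fin r → (σ →₀ ℕ))
    (he : ∀ l, e l ≠ 0)
    (hdisj : ∀ l l', l ≠ l' → Disjoint (e l).support (e l').support)
    (u : Fin r → MvPolynomial σ K) (hu : ∀ l, u l = monomial (e l) 1)
    (I : Ideal (MvPolynomial σ K)) (hI : I = Ideal.span (Set.range u))
    (P : Ideal (MvPolynomial σ K))
    (hPass : P ∈ associatedPrimes (MvPolynomial σ K) (MvPolynomial σ K ⧸ I))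
    (n : ℕ) (hn : 1 ≤ n) :
    vnumber (I ^ n) = vnumberAt (I ^ n) P ∧
    vnumber (I ^ n) =
      n * (Finset.univ.inf' ⟨⟨0, hr⟩, Finset.mem_univ _⟩ (fun l => (e l).sum fun _ k => k))
        + ((∑ l, (e l).sum fun _ k => k) - r)
        - (Finset.univ.inf' ⟨⟨0, hr⟩, Finset.mem_univ _⟩ (fun l => (e l).sum fun _ k => k)) := by
  classical
  -- identify powers of I with explicit monomial ideals
  have hueq : u = fun l => monomial (e l) 1 := funext hu
  have hIn : ∀ N : ℕ, I ^ N = CIv.mspan K (CIv.Apow e N) := by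
    intro N
    rw [hI, hueq]
    exact CIv.mspan_range_pow e N
  have hI1 : I = CIv.mspan K (CIv.Apow e 1) := by
    have := hIn 1
    rwa [pow_one] at this
  -- smul on the quotient is multiplication
  have hsm : ∀ (J : Ideal (MvPolynomial σ K)) (y z : MvPolynomial σ K),
      y • (Ideal.Quotient.mk J z) = Ideal.Quotient.mk J (y * z) := by
    intro J y z
    rfl
  -- the associated prime is a colon ideal
  obtain ⟨hPprime, x, hx⟩ := hPass
  obtain ⟨g, rfl⟩ := Ideal.Quotient.mk_surjective x
  have hcolon1 : ∀ y, y ∈ P ↔ ∃ k : ℕ, y ^ k * g ∈ CIv.mspan K (CIv.Apow e 1) := by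
    intro y
    rw [hx, Ideal.mem_radical_iff]
    simp only [Submodule.mem_colon_singleton, Submodule.mem_bot, hsm,
      Ideal.Quotient.eq_zero_iff_mem, ← hI1]
  -- classify P
  obtain ⟨c, hPc⟩ := CIv.classifyRad he hdisj hPprime hcolon1
  -- minimal degree generator
  obtain ⟨m0, _, hm0⟩ := Finset.exists_mem_eq_inf'
    (⟨⟨0, hr⟩, Finset.mem_univ _⟩ : (Finset.univ : Finset (Fin r)).Nonempty)
    (fun l : Fin r => (e l).degree)
  -- abbreviations
  set α : ℕ := Finset.univ.inf' (⟨⟨0, hr⟩, Finset.mem_univ _⟩ :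
      (Finset.univ : Finset (Fin r)).Nonempty) (fun l : Fin r => (e l).degree) with hα
  set W : ℕ := (CIv.wit e c m0 n).degree with hW
  have hWr : W + r = (n - 1) * α + ∑ l, (e l).degree := by
    rw [hW, CIv.wit_degree c m0 n, hm0]
  -- the witness polynomial
  set f : MvPolynomial σ K := monomial (CIv.wit e c m0 n) 1 with hf
  have hfhom : f.IsHomogeneous W := isHomogeneous_monomial _ rfl
  have hfcolon : Submodule.colon (I ^ n) (Ideal.span {f}) = P := by
    ext y
    rw [← Ideal.submodule_span_eq, Submodule.mem_colon_span_singleton, smul_eq_mul, hIn n, hf,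
        CIv.wit_colon hdisj hn, hPc]
  -- general lower bound: any valid witness for any prime colon has degree ≥ W
  have hlower : ∀ (d : ℕ) (f' : MvPolynomial σ K), f'.IsHomogeneous d →
      (Submodule.colon (I ^ n) (Ideal.span {f'})).IsPrime → W ≤ d := by
    intro d f' hf'hom hcolprime
    set P' := Submodule.colon (I ^ n) (Ideal.span {f'}) with hP'
    have hmemP' : ∀ y, y ∈ P' ↔ y * f' ∈ CIv.mspan K (CIv.Apow e n) := by
      intro y
      rw [hP', ← Ideal.submodule_span_eq, Submodule.mem_colon_span_singleton, smul_eq_mul, hIn n]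
    have hf'notin : f' ∉ CIv.mspan K (CIv.Apow e n) := by
      intro hmem
      refine hcolprime.ne_top (Ideal.eq_top_iff_one _ |>.2 ?_)
      rw [hmemP', one_mul]
      exact hmem
    have hX : ∀ l : Fin r, ∃ i ∈ (e l).support,
        (X i : MvPolynomial σ K) * f' ∈ CIv.mspan K (CIv.Apow e n) := by
      intro l
      have hmono : (monomial (n • e l) 1 : MvPolynomial σ K) ∈ P' := by
        rw [hmemP']
        exact Ideal.mul_mem_right _ _ (CIv.pow_gen_mem n l)
      obtain ⟨i, hi, hXi⟩ := CIv.prime_contains_var hcolprime hmono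
      exact ⟨i, CIv.supp_smul_subset hn (e l) hi, (hmemP' _).1 hXi⟩
    obtain ⟨m, hm, hdeg⟩ := CIv.deg_lower hr he hdisj hn hf'notin hX
    have hmd : m.degree = d := by
      rw [Finsupp.degree_eq_weight_one]
      exact hf'hom (MvPolynomial.mem_support_iff.1 hm)
    rw [hmd] at hdeg
    rw [← hα] at hdeg
    omega
  -- x f ∈ Iⁿ iff x ∈ P, so the colon of f is an associated prime of Iⁿ
  have hassoc : Submodule.colon (I ^ n) (Ideal.span {f}) ∈
      associatedPrimes (MvPolynomial σ K) (MvPolynomial σ K ⧸ I ^ n) := by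
    rw [hfcolon]
    refine ⟨hPc ▸ CIv.sgl_isPrime (CIv.Tc e c), ⟨Ideal.Quotient.mk _ f, ?_⟩⟩
    have hcol : (⊥ : Submodule (MvPolynomial σ K) (MvPolynomial σ K ⧸ I ^ n)).colon
        {Ideal.Quotient.mk _ f} = P := by
      ext y
      rw [Submodule.mem_colon_singleton, Submodule.mem_bot, hsm, Ideal.Quotient.eq_zero_iff_mem,
        ← hfcolon, ← Ideal.submodule_span_eq, Submodule.mem_colon_span_singleton, smul_eq_mul]
    rw [hcol, hPprime.radical]
  -- vnumberAt = W
  have hvAt : vnumberAt (I ^ n) P = W := by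
    apply le_antisymm
    · exact Nat.sInf_le ⟨f, hfhom, hfcolon⟩
    · refine le_csInf ⟨W, f, hfhom, hfcolon⟩ ?_
      rintro d ⟨f', hf'hom, hf'col⟩
      exact hlower d f' hf'hom (hf'col ▸ hPprime)
  -- vnumber = W
  have hv : vnumber (I ^ n) = W := by
    apply le_antisymm
    · exact Nat.sInf_le ⟨f, hfhom, hassoc⟩
    · refine le_csInf ⟨W, f, hfhom, hassoc⟩ ?_
      rintro d ⟨f', hf'hom, hf'ass⟩
      exact hlower d f' hf'hom hf'ass.isPrime
  -- final arithmetic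
  have hαs : (Finset.univ.inf' (⟨⟨0, hr⟩, Finset.mem_univ _⟩ :
      (Finset.univ : Finset (Fin r)).Nonempty) (fun l : Fin r => (e l).sum fun _ k => k)) = α := rfl
  have hDs : (∑ l, (e l).sum fun _ k => k) = ∑ l, (e l).degree := rfl
  constructor
  · rw [hv, hvAt]
  · rw [hv, hαs, hDs]
    have hD1 : ∀ l : Fin r, 1 ≤ (e l).degree := by
      intro l
      by_contra h
      have : (e l).degree = 0 := by omega
      exact he l ((Finsupp.degree_eq_zero_iff _).1 this)
    have hrD : r ≤ ∑ l, (e l).degree := by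
      calc r = ∑ _l : Fin r, 1 := by simp
        _ ≤ ∑ l, (e l).degree := Finset.sum_le_sum fun l _ => hD1 l
    have hna : n * α = (n - 1) * α + α := by
      have h1 : n = (n - 1) + 1 := (Nat.sub_add_cancel hn).symm
      calc n * α = ((n-1) + 1) * α := by rw [← h1]
        _ = (n - 1) * α + α := by ring
    omega
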